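/- For X, Y ∈ L^2_R with z = P_R(X), ξ = P_R(Y), the geodesic distance satisfies R * acosh(-(X ⊙ Y)/R^2) = 2R * asinh( R |z - ξ| / sqrt((R^2 - |z|^2)(R^2 - |ξ|^2)) ). -/

import Mathlib

def lor (X Y : ℝ × ℝ × ℝ) : ℝ := X.1 * Y.1 + X.2.1 * Y.2.1 - X.2.2 * Y.2.2

noncomputable def arcosh (x : ℝ) : ℝ := Real.log (x + Real.sqrt (x ^ 2 - 1))

noncomputable def stereo (R : ℝ) (X : ℝ × ℝ × ℝ) : ℂ :=
  (R * X.1 + R * X.2.1 * Complex.I) / (R + X.2.2)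

lemma arcosh_eq_aux (t : ℝ) (ht : 1 ≤ t) :
    arcosh t = 2 * Real.arsinh (Real.sqrt ((t - 1) / 2)) := by
  set s := Real.sqrt ((t - 1) / 2) with hs
  have hs0 : 0 ≤ s := Real.sqrt_nonneg _
  have hs2 : s ^ 2 = (t - 1) / 2 := Real.sq_sqrt (by linarith)
  have hu : 0 < s + Real.sqrt (1 + s ^ 2) := by
    have := Real.sqrt_pos.2 (by positivity : (0:ℝ) < 1 + s ^ 2)
    linarith
  rw [Real.arsinh, arcosh, show (2:ℝ) = ((2:ℕ):ℝ) by norm_num, ← Real.log_pow]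
  congr 1
  have h1 : Real.sqrt (1 + s ^ 2) ^ 2 = 1 + s ^ 2 := Real.sq_sqrt (by positivity)
  have h2 : Real.sqrt (t ^ 2 - 1) = 2 * s * Real.sqrt (1 + s ^ 2) := by
    rw [show t ^ 2 - 1 = (2 * s * Real.sqrt (1 + s ^ 2)) ^ 2 by
      rw [mul_pow, mul_pow, h1]; nlinarith [hs2]]
    exact Real.sqrt_sq (by positivity)
  rw [h2]; nlinarith [h1, hs2]

lemma stereo_eq_aux (R : ℝ) (hR : 0 < R) (X : ℝ × ℝ × ℝ) (hX3 : 0 < X.2.2) :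
    stereo R X = ((R * X.1 / (R + X.2.2) : ℝ) : ℂ) +
      ((R * X.2.1 / (R + X.2.2) : ℝ) : ℂ) * Complex.I := by
  have h : R + X.2.2 ≠ 0 := by positivity
  have ha : (R : ℂ) + (X.2.2 : ℂ) ≠ 0 := by
    rw [← Complex.ofReal_add]; exact_mod_cast h
  unfold stereo; push_cast; field_simp

set_option maxHeartbeats 1000000 in
theorem geodesic_eq_disk_formula (R : ℝ) (hR : 0 < R) (X Y : ℝ × ℝ × ℝ)
    (hX : lor X X = -R ^ 2) (hX3 : 0 < X.2.2)
    (hY : lor Y Y = -R ^ 2) (hY3 : 0 < Y.2.2) :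
    R * arcosh (-(lor X Y) / R ^ 2) =
      2 * R * Real.arsinh (R * ‖stereo R X - stereo R Y‖ /
        Real.sqrt ((R ^ 2 - ‖stereo R X‖ ^ 2) *
          (R ^ 2 - ‖stereo R Y‖ ^ 2))) := by
  obtain ⟨x1, x2, x3⟩ := X
  obtain ⟨y1, y2, y3⟩ := Y
  simp only [lor] at hX hY ⊢
  simp only at hX3 hY3
  have ha : (0:ℝ) < R + x3 := by linarith
  have hb : (0:ℝ) < R + y3 := by linarith
  have ha' : R + x3 ≠ 0 := ne_of_gt ha
  have hb' : R + y3 ≠ 0 := ne_of_gt hb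
  have hR' : R ≠ 0 := ne_of_gt hR
  -- reverse Cauchy-Schwarz
  have hL : x1 * y1 + x2 * y2 - x3 * y3 ≤ -R ^ 2 := by
    have hkey : (x3 * y3) ^ 2 ≥ (R ^ 2 + (x1 * y1 + x2 * y2)) ^ 2 := by
      nlinarith [sq_nonneg (x1 - y1), sq_nonneg (x2 - y2), sq_nonneg (x1 * y2 - x2 * y1),
        sq_nonneg R, sq_nonneg (x1 + y1), sq_nonneg (x2 + y2)]
    nlinarith [mul_pos hX3 hY3, hkey,
      sq_nonneg (x3 * y3 - (R ^ 2 + (x1 * y1 + x2 * y2)))]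
  have hz := stereo_eq_aux R hR (x1, x2, x3) hX3
  have hw := stereo_eq_aux R hR (y1, y2, y3) hY3
  simp only at hz hw
  have habsX : ‖stereo R (x1, x2, x3)‖ ^ 2 =
      (R * x1 / (R + x3)) ^ 2 + (R * x2 / (R + x3)) ^ 2 := by
    rw [hz, Complex.sq_norm, Complex.normSq_add_mul_I]
  have habsY : ‖stereo R (y1, y2, y3)‖ ^ 2 =
      (R * y1 / (R + y3)) ^ 2 + (R * y2 / (R + y3)) ^ 2 := by
    rw [hw, Complex.sq_norm, Complex.normSq_add_mul_I]
  have hsub : stereo R (x1, x2, x3) - stereo R (y1, y2, y3) =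
      ((R * x1 / (R + x3) - R * y1 / (R + y3) : ℝ) : ℂ) +
      ((R * x2 / (R + x3) - R * y2 / (R + y3) : ℝ) : ℂ) * Complex.I := by
    rw [hz, hw]; push_cast; ring
  have habsD : ‖stereo R (x1, x2, x3) - stereo R (y1, y2, y3)‖ ^ 2 =
      (R * x1 / (R + x3) - R * y1 / (R + y3)) ^ 2 +
      (R * x2 / (R + x3) - R * y2 / (R + y3)) ^ 2 := by
    rw [hsub, Complex.sq_norm, Complex.normSq_add_mul_I]
  have hRX : R ^ 2 - ((R * x1 / (R + x3)) ^ 2 + (R * x2 / (R + x3)) ^ 2) =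
      2 * R ^ 3 / (R + x3) := by
    field_simp
    linear_combination (-1) * hX
  have hRY : R ^ 2 - ((R * y1 / (R + y3)) ^ 2 + (R * y2 / (R + y3)) ^ 2) =
      2 * R ^ 3 / (R + y3) := by
    field_simp
    linear_combination (-1) * hY
  have hDval : (R * x1 / (R + x3) - R * y1 / (R + y3)) ^ 2 +
      (R * x2 / (R + x3) - R * y2 / (R + y3)) ^ 2 =
      2 * R ^ 2 * (-(x1 * y1 + x2 * y2 - x3 * y3) - R ^ 2) / ((R + x3) * (R + y3)) := by
    field_simp
    linear_combination (R+y3)^2 * hX + (R+x3)^2 * hY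
  set K : ℝ := -(x1 * y1 + x2 * y2 - x3 * y3) - R ^ 2 with hKdef
  have hK0 : 0 ≤ K := by rw [hKdef]; linarith
  rw [habsX, habsY, hRX, hRY]
  set A : ℝ := ‖stereo R (x1, x2, x3) - stereo R (y1, y2, y3)‖ with hAdef
  have hA0 : 0 ≤ A := norm_nonneg _
  have hA2 : A ^ 2 = 2 * R ^ 2 * K / ((R + x3) * (R + y3)) := by
    rw [hAdef, habsD, hDval]
  set S : ℝ := Real.sqrt (2 * R ^ 3 / (R + x3) * (2 * R ^ 3 / (R + y3))) with hSdef
  have hprod : (0:ℝ) < 2 * R ^ 3 / (R + x3) * (2 * R ^ 3 / (R + y3)) := by positivity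
  have hS0 : 0 < S := Real.sqrt_pos.2 hprod
  have hS2 : S ^ 2 = 2 * R ^ 3 / (R + x3) * (2 * R ^ 3 / (R + y3)) :=
    Real.sq_sqrt (le_of_lt hprod)
  have ht : 1 ≤ -(x1 * y1 + x2 * y2 - x3 * y3) / R ^ 2 := by
    rw [le_div_iff₀ (by positivity)]; linarith
  rw [arcosh_eq_aux _ ht]
  have harg : R * A / S = Real.sqrt ((-(x1 * y1 + x2 * y2 - x3 * y3) / R ^ 2 - 1) / 2) := by
    have h1 : (R * A / S) ^ 2 = (-(x1 * y1 + x2 * y2 - x3 * y3) / R ^ 2 - 1) / 2 := by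
      rw [div_pow, mul_pow, hA2, hS2, hKdef]
      field_simp
    rw [← h1, Real.sqrt_sq (by positivity)]
  rw [← harg]
  ring
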